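/- Let gf1(a,c) := gf(a,a,c,0) be the generating function of weighted lattice paths from (a,a) to (c,0). Then for c \ge a \ge 0, gf1(a,c) = (2 q^a)^{a-c} \prod_{j=1}^{c-a} ( (X q^{j-1} + Y q^{1-j})(1 - q^{2a+2j}) ) / (1 - q^{2j}). -/

import Mathlib

/-- The field of rational functions in the three indeterminates `X`, `Y`, `q`. -/
noncomputable abbrev MyF : Type := FractionRing (MvPolynomial (Fin 3) ℚ)

/-- The indeterminate `X`. -/
noncomputable def Xv : MyF := algebraMap (MvPolynomial (Fin 3) ℚ) MyF (MvPolynomial.X 0)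
/-- The indeterminate `Y`. -/
noncomputable def Yv : MyF := algebraMap (MvPolynomial (Fin 3) ℚ) MyF (MvPolynomial.X 1)
/-- The indeterminate `q`. -/
noncomputable def qv : MyF := algebraMap (MvPolynomial (Fin 3) ℚ) MyF (MvPolynomial.X 2)

/-- The weight of a lattice path (encoded as a list of steps, `true` = right step,
`false` = down step) starting at a given point: a right step from `(u,v)` to `(u+1,v)`
has weight `(X q^{u-2v} + Y q^{2v-u})/2`, a down step has weight `1`, and the weight
of the path is the product of the weights of its steps. -/
noncomputable def pathWeight (X Y q : MyF) : ℤ × ℤ → List Bool → MyF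
  | _, [] => 1
  | p, true :: s =>
      (X * q ^ (p.1 - 2 * p.2) + Y * q ^ (2 * p.2 - p.1)) / 2 *
        pathWeight X Y q (p.1 + 1, p.2) s
  | p, false :: s => pathWeight X Y q (p.1, p.2 - 1) s

/-- The endpoint of a lattice path (list of steps) starting at a given point. -/
def endpt : ℤ × ℤ → List Bool → ℤ × ℤ
  | p, [] => p
  | p, true :: s => endpt (p.1 + 1, p.2) s
  | p, false :: s => endpt (p.1, p.2 - 1) s

/-- `gf X Y q a b c d` is the generating function of all lattice paths from `(a,b)`
to `(c,d)` with unit steps to the right and downwards, weighted as in `pathWeight`.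
(Any such path has exactly `c-a` right steps and `b-d` down steps, hence length
`(c-a)+(b-d)`; the sum ranges over all step sequences of that length ending at
`(c,d)`.  In particular `gf X Y q a b c d = 0` when `a > c` or `b < d`.) -/
noncomputable def gf (X Y q : MyF) (a b c d : ℤ) : MyF :=
  ∑ s : Fin ((c - a) + (b - d)).toNat → Bool,
    if endpt (a, b) (List.ofFn s) = (c, d) then pathWeight X Y q (a, b) (List.ofFn s) else 0

/-! ### Auxiliary: gf with explicit length -/

noncomputable def gfAux (X Y q : MyF) (n : ℕ) (a b c d : ℤ) : MyF :=
  ∑ s : Fin n → Bool,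
    if endpt (a, b) (List.ofFn s) = (c, d) then pathWeight X Y q (a, b) (List.ofFn s) else 0

lemma gf_eq_gfAux (X Y q : MyF) (a b c d : ℤ) :
    gf X Y q a b c d = gfAux X Y q ((c - a) + (b - d)).toNat a b c d := rfl

lemma endpt_mono (s : List Bool) : ∀ p : ℤ × ℤ, p.1 ≤ (endpt p s).1 ∧ (endpt p s).2 ≤ p.2 := by
  induction s with
  | nil => intro p; simp [endpt]
  | cons x t ih =>
    intro p
    cases x
    · have := ih (p.1, p.2 - 1)
      simp only [endpt] at *
      constructor <;> [exact this.1; omega]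
    · have := ih (p.1 + 1, p.2)
      simp only [endpt] at *
      constructor <;> omega

lemma gfAux_zero_right (X Y q : MyF) (n : ℕ) (a b c d : ℤ) (h : c < a) :
    gfAux X Y q n a b c d = 0 := by
  unfold gfAux
  apply Finset.sum_eq_zero
  intro s _
  rw [if_neg]
  intro hs
  have := (endpt_mono (List.ofFn s) (a, b)).1
  rw [hs] at this
  simp at this; omega

lemma gfAux_zero_down (X Y q : MyF) (n : ℕ) (a b c d : ℤ) (h : b < d) :
    gfAux X Y q n a b c d = 0 := by
  unfold gfAux
  apply Finset.sum_eq_zero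
  intro s _
  rw [if_neg]
  intro hs
  have := (endpt_mono (List.ofFn s) (a, b)).2
  rw [hs] at this
  simp at this; omega

lemma gfAux_nil (X Y q : MyF) (a b : ℤ) : gfAux X Y q 0 a b a b = 1 := by
  unfold gfAux
  rw [Fintype.sum_unique]
  simp [endpt, pathWeight, List.ofFn]

lemma gfAux_succ (X Y q : MyF) (n : ℕ) (a b c d : ℤ) :
    gfAux X Y q (n+1) a b c d =
      (X * q ^ (a - 2 * b) + Y * q ^ (2 * b - a)) / 2 * gfAux X Y q n (a+1) b c d
        + gfAux X Y q n a (b-1) c d := by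
  unfold gfAux
  rw [← Equiv.sum_comp (Fin.consEquiv (fun _ => Bool))]
  rw [Fintype.sum_prod_type, Fintype.sum_bool]
  congr 1
  · -- true case
    have hl : ∀ s : Fin n → Bool, List.ofFn (Fin.cons true s : Fin (n+1) → Bool)
        = true :: List.ofFn s := by
      intro s
      rw [List.ofFn_succ]
      simp
    rw [Finset.mul_sum]
    apply Finset.sum_congr rfl
    intro s _
    rw [show ((Fin.consEquiv fun _ => Bool) (true, s)) = Fin.cons true s from rfl, hl s]
    simp only [endpt, pathWeight]
    rw [mul_ite, mul_zero]
    rfl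
  · -- false case
    apply Finset.sum_congr rfl
    intro s _
    rw [show ((Fin.consEquiv fun _ => Bool) (false, s)) = Fin.cons false s from rfl]
    rw [List.ofFn_succ]
    simp only [Fin.cons_zero, Fin.cons_succ]
    simp only [endpt, pathWeight]
    rfl

lemma gf_rec (X Y q : MyF) (a b c : ℤ) (hac : a ≤ c) (hb : 0 ≤ b) (h1 : 1 ≤ (c - a) + b) :
    gf X Y q a b c 0 =
      (X * q ^ (a - 2 * b) + Y * q ^ (2 * b - a)) / 2 * gf X Y q (a+1) b c 0
        + gf X Y q a (b-1) c 0 := by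
  rw [gf_eq_gfAux, gf_eq_gfAux, gf_eq_gfAux]
  have h2 : ((c - a) + (b - 0)).toNat = (((c - a) + b).toNat - 1) + 1 := by omega
  rw [h2, gfAux_succ]
  have h3 : ((c - (a+1)) + (b - 0)).toNat = ((c - a) + b).toNat - 1 := by omega
  have h4 : ((c - a) + ((b-1) - 0)).toNat = ((c - a) + b).toNat - 1 := by omega
  rw [h3, h4]

/-! ### Nonvanishing lemmas -/

lemma algMap_inj : Function.Injective (algebraMap (MvPolynomial (Fin 3) ℚ) MyF) :=
  IsFractionRing.injective _ _

lemma qv_ne_zero : qv ≠ 0 := by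
  rw [qv, map_ne_zero_iff _ algMap_inj]
  exact (MvPolynomial.X_ne_zero 2 : (MvPolynomial.X 2 : MvPolynomial (Fin 3) ℚ) ≠ 0)

lemma myTwo_ne_zero : (2 : MyF) ≠ 0 := by norm_num

lemma one_sub_qpow_ne_zero (k : ℕ) (hk : k ≠ 0) : (1 : MyF) - qv ^ k ≠ 0 := by
  have : (1 : MyF) - qv ^ k
      = algebraMap (MvPolynomial (Fin 3) ℚ) MyF (1 - (MvPolynomial.X 2) ^ k) := by
    rw [qv, map_sub, map_one, map_pow]
  rw [this, map_ne_zero_iff _ algMap_inj]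
  intro h
  have := congrArg (MvPolynomial.eval (fun _ => (0:ℚ))) h
  simp [zero_pow hk] at this

lemma one_sub_qzpow_ne_zero (k : ℤ) (hk : 0 < k) : (1 : MyF) - qv ^ k ≠ 0 := by
  have : qv ^ k = qv ^ k.toNat := by
    rw [← zpow_natCast]; congr 1; omega
  rw [this]
  exact one_sub_qpow_ne_zero k.toNat (by omega)

/-! ### The product pieces -/

noncomputable def PL (a b : ℤ) (n : ℕ) : MyF :=
  ∏ t ∈ Finset.range n, (Xv * qv ^ (a - b + (t:ℤ)) + Yv * qv ^ (b - a - (t:ℤ)))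

noncomputable def PB (b : ℤ) (n : ℕ) : MyF :=
  ∏ t ∈ Finset.range n, (1 - qv ^ (2*b + 2*((t:ℤ)+1)))

noncomputable def PD (n : ℕ) : MyF :=
  ∏ t ∈ Finset.range n, (1 - qv ^ (2*((t:ℤ)+1)))

lemma PD_ne_zero (n : ℕ) : PD n ≠ 0 := by
  apply Finset.prod_ne_zero_iff.mpr
  intro t _
  exact one_sub_qzpow_ne_zero _ (by omega)

lemma PL_succ' (a b : ℤ) (m : ℕ) :
    PL a b (m+1) = PL (a+1) b m * (Xv * qv ^ (a - b) + Yv * qv ^ (b - a)) := by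
  rw [PL, Finset.prod_range_succ']
  congr 1
  · apply Finset.prod_congr rfl
    intro t _
    push_cast
    ring_nf
  · push_cast
    ring_nf

lemma PL_shift (a b : ℤ) (n : ℕ) : PL a (b-1) n = PL (a+1) b n := by
  apply Finset.prod_congr rfl
  intro t _
  ring_nf

lemma PL_succ (a b : ℤ) (m : ℕ) :
    PL a b (m+1) = PL a b m * (Xv * qv ^ (a - b + (m:ℤ)) + Yv * qv ^ (b - a - (m:ℤ))) :=
  Finset.prod_range_succ _ _

lemma PB_succ (b : ℤ) (m : ℕ) :
    PB b (m+1) = PB b m * (1 - qv ^ (2*b + 2*((m:ℤ)+1))) :=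
  Finset.prod_range_succ _ _

lemma PB_shift (b : ℤ) (m : ℕ) :
    PB (b-1) (m+1) = (1 - qv ^ (2*b)) * PB b m := by
  rw [PB, Finset.prod_range_succ', mul_comm]
  congr 1
  · push_cast
    ring_nf
  · rw [PB]
    apply Finset.prod_congr rfl
    intro t _
    push_cast
    ring_nf

lemma PD_succ (m : ℕ) : PD (m+1) = PD m * (1 - qv ^ (2*((m:ℤ)+1))) :=
  Finset.prod_range_succ _ _

/-! ### The closed form -/

noncomputable def Gfun (a b c : ℤ) : MyF :=
  (2:MyF) ^ (a-c) * qv ^ (b*(a-c)) *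
    (PL a b (c-a).toNat * PB b (c-a).toNat / PD (c-a).toNat)

lemma Gfun_diag (a b : ℤ) : Gfun a b a = 1 := by
  simp [Gfun, PL, PB, PD]

lemma PB_zero_eq_PD (n : ℕ) : PB 0 n = PD n := by
  apply Finset.prod_congr rfl
  intro t _
  ring_nf


lemma key {F : Type*} [Field F] (X Y x u p K Q L B D : F) (hx : x ≠ 0) (hu : u ≠ 0)
    (hp : p ≠ 0) (hD : D ≠ 0) (hp2 : 1 - p*p ≠ 0) (h2 : (2:F) ≠ 0) :
    (X * (x * u⁻¹) + Y * (x⁻¹ * u)) / 2 * (K * 2 * (Q * u) * (L * B / D)) +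
      K * (Q * p) * (L * (X * (x * p) + Y * (x⁻¹ * p⁻¹)) * ((1 - u * u) * B) / (D * (1 - p * p))) =
    K * Q * (L * (X * x + Y * x⁻¹) * (B * (1 - u * u * (p * p))) / (D * (1 - p * p))) := by
  field_simp
  have hp2' : (1:F) - p ^ 2 ≠ 0 := by rwa [sq]
  field_simp
  ring

set_option maxHeartbeats 1600000 in
theorem gf_closed : ∀ (N : ℕ) (a b c : ℤ), 0 ≤ b → a ≤ c → ((c-a) + b).toNat = N →
    gf Xv Yv qv a b c 0 = Gfun a b c := by
  intro N
  induction N with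
  | zero =>
    intro a b c hb hac hN
    obtain rfl : a = c := by omega
    obtain rfl : b = 0 := by omega
    rw [gf_eq_gfAux, show ((a-a) + ((0:ℤ)-0)).toNat = 0 by omega, gfAux_nil, Gfun_diag]
  | succ N ih =>
    intro a b c hb hac hN
    by_cases hca : a = c
    · -- vertical only
      subst hca
      have hb1 : 1 ≤ b := by omega
      rw [gf_rec _ _ _ _ _ _ le_rfl hb (by omega)]
      have hz : gf Xv Yv qv (a+1) b a 0 = 0 := by
        rw [gf_eq_gfAux]; exact gfAux_zero_right _ _ _ _ _ _ _ _ (by omega)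
      rw [hz, mul_zero, zero_add]
      rw [ih a (b-1) a (by omega) le_rfl (by omega)]
      rw [Gfun_diag, Gfun_diag]
    · have hlt : a < c := lt_of_le_of_ne hac hca
      set m : ℕ := (c - a - 1).toNat with hm
      have h1 : (c - a).toNat = m + 1 := by omega
      have h2 : (c - (a+1)).toNat = m := by omega
      have hca' : c - a = (m:ℤ) + 1 := by omega
      by_cases hb0 : b = 0
      · -- bottom row
        subst hb0
        rw [gf_rec _ _ _ _ _ _ hac le_rfl (by omega)]
        have hz : gf Xv Yv qv a (0-1) c 0 = 0 := by
          rw [gf_eq_gfAux]; exact gfAux_zero_down _ _ _ _ _ _ _ _ (by omega)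
        rw [hz, add_zero]
        rw [ih (a+1) 0 c le_rfl (by omega) (by omega)]
        simp only [Gfun, h1, h2]
        rw [PB_zero_eq_PD, PB_zero_eq_PD]
        rw [PL_succ' a 0 m]
        rw [show (a+1) - c = (a-c) + 1 by ring, zpow_add_one₀ myTwo_ne_zero]
        rw [show a - 2*(0:ℤ) = a - 0 by ring, show 2*(0:ℤ) - a = 0 - a by ring]
        rw [zero_mul, zero_mul, zpow_zero, PD_succ]
        have hPD := PD_ne_zero m
        have hp2 : (1:MyF) - qv ^ (2*((m:ℤ)+1)) ≠ 0 :=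
          one_sub_qzpow_ne_zero _ (by omega)
        field_simp
      · -- main case
        have hb1 : 1 ≤ b := by omega
        rw [gf_rec _ _ _ _ _ _ hac hb (by omega)]
        rw [ih (a+1) b c hb (by omega) (by omega)]
        rw [ih a (b-1) c (by omega) hac (by omega)]
        simp only [Gfun, h1, h2]
        rw [PL_succ' a b m, PL_shift, PL_succ (a+1) b m, PB_shift, PB_succ, PD_succ]
        rw [show (a+1) - c = (a-c) + 1 by ring, zpow_add_one₀ myTwo_ne_zero]
        rw [show b * (a - c + 1) = b*(a-c) + b by ring, zpow_add₀ qv_ne_zero]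
        rw [show (b-1) * (a - c) = b*(a-c) + ((m:ℤ)+1) by rw [← hca']; ring,
          zpow_add₀ qv_ne_zero]
        -- express all zpow in atoms x = qv^(a-b), u = qv^b, p = qv^(m+1)
        have e1 : qv ^ (b - a) = (qv ^ (a-b))⁻¹ := by
          rw [← zpow_neg]; congr 1; ring
        have e2 : qv ^ (a - 2*b) = qv ^ (a-b) * (qv ^ b)⁻¹ := by
          rw [← zpow_neg, ← zpow_add₀ qv_ne_zero]; congr 1; ring
        have e3 : qv ^ (2*b - a) = (qv ^ (a-b))⁻¹ * qv ^ b := by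
          rw [← zpow_neg, ← zpow_add₀ qv_ne_zero]; congr 1; ring
        have e4 : qv ^ (2*b) = qv ^ b * qv ^ b := by
          rw [← zpow_add₀ qv_ne_zero]; congr 1; ring
        have e5 : qv ^ (2*b + 2*((m:ℤ)+1))
            = qv ^ b * qv ^ b * (qv ^ ((m:ℤ)+1) * qv ^ ((m:ℤ)+1)) := by
          rw [← zpow_add₀ qv_ne_zero, ← zpow_add₀ qv_ne_zero, ← zpow_add₀ qv_ne_zero]
          congr 1; ring
        have e6 : qv ^ (2*((m:ℤ)+1)) = qv ^ ((m:ℤ)+1) * qv ^ ((m:ℤ)+1) := by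
          rw [← zpow_add₀ qv_ne_zero]; congr 1; ring
        have e7 : qv ^ ((a+1) - b + (m:ℤ)) = qv ^ (a-b) * qv ^ ((m:ℤ)+1) := by
          rw [← zpow_add₀ qv_ne_zero]; congr 1; ring
        have e8 : qv ^ (b - (a+1) - (m:ℤ)) = (qv ^ (a-b))⁻¹ * (qv ^ ((m:ℤ)+1))⁻¹ := by
          rw [← zpow_neg, ← zpow_neg, ← zpow_add₀ qv_ne_zero]; congr 1; ring
        rw [e1, e2, e3, e4, e5, e6, e7, e8]
        have hx : qv ^ (a-b) ≠ 0 := zpow_ne_zero _ qv_ne_zero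
        have hu : qv ^ b ≠ 0 := zpow_ne_zero _ qv_ne_zero
        have hp : qv ^ ((m:ℤ)+1) ≠ 0 := zpow_ne_zero _ qv_ne_zero
        have hPD := PD_ne_zero m
        have hp2 : (1:MyF) - qv ^ ((m:ℤ)+1) * qv ^ ((m:ℤ)+1) ≠ 0 := by
          rw [← zpow_add₀ qv_ne_zero]
          exact one_sub_qzpow_ne_zero _ (by omega)
        set x := qv ^ (a-b)
        set u := qv ^ b
        set p := qv ^ ((m:ℤ)+1)
        set K := (2:MyF) ^ (a-c)
        set Q := qv ^ (b*(a-c))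
        set PLv := PL (a+1) b m
        set PBv := PB b m
        set PDv := PD m
        exact key Xv Yv x u p K Q PLv PBv PDv hx hu hp hPD hp2 myTwo_ne_zero

/-- For `c ≥ a ≥ 0`, the generating function `gf1(a,c) := gf(a,a,c,0)` of weighted
lattice paths from `(a,a)` to `(c,0)` equals
`(2 q^a)^{a-c} ∏_{j=1}^{c-a} ((X q^{j-1} + Y q^{1-j})(1 - q^{2a+2j}))/(1 - q^{2j})`. -/
theorem gf_one_eval (a c : ℤ) (ha : 0 ≤ a) (hac : a ≤ c) :
    gf Xv Yv qv a a c 0 =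
      (2 * qv ^ a) ^ (a - c) *
        ∏ t ∈ Finset.range (c - a).toNat,
          ((Xv * qv ^ ((t : ℤ) + 1 - 1) + Yv * qv ^ (1 - ((t : ℤ) + 1))) *
              (1 - qv ^ (2 * a + 2 * ((t : ℤ) + 1)))) /
            (1 - qv ^ (2 * ((t : ℤ) + 1))) := by
  rw [gf_closed (((c-a) + a).toNat) a a c ha hac rfl, Gfun, mul_zpow, ← zpow_mul,
    Finset.prod_div_distrib, Finset.prod_mul_distrib]
  rw [show (∏ t ∈ Finset.range (c-a).toNat,
        (Xv * qv ^ ((t:ℤ) + 1 - 1) + Yv * qv ^ (1 - ((t:ℤ) + 1))))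
      = PL a a (c-a).toNat from Finset.prod_congr rfl (fun t _ => by ring_nf)]
  rw [show (∏ t ∈ Finset.range (c-a).toNat, (1 - qv ^ (2*a + 2*((t:ℤ)+1))))
      = PB a (c-a).toNat from rfl]
  rw [show (∏ t ∈ Finset.range (c-a).toNat, (1 - qv ^ (2*((t:ℤ)+1))))
      = PD (c-a).toNat from rfl]
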